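/- In a Hamming graph G = ∏_{i=1}^t K_{n_i} with all thresholds equal to 2, for any vertex x and subsets A, B of {1,…,t}, the activation closure of x_A ∪ x_B equals x_{A ∩ B}, where x_C denotes the set of vertices agreeing with x on all coordinates in C. -/

import Mathlib

/-- The Hamming graph `∏ K_{n i}`: vertices are tuples, adjacent iff they differ
in exactly one coordinate (Hamming distance 1). -/
def hammingGraph {t : ℕ} (n : Fin t → ℕ) : SimpleGraph (Π i, Fin (n i)) where
  Adj x y := hammingDist x y = 1
  symm := ⟨fun x y h => (hammingDist_comm y x).trans h⟩
  loopless := ⟨fun x h => by simp [hammingDist_self] at h⟩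

/-- The "subcube" `x_A`: all vertices agreeing with `x` on every coordinate in `A`. -/
def subcube {t : ℕ} {n : Fin t → ℕ} (x : Π i, Fin (n i)) (A : Set (Fin t)) :
    Set (Π i, Fin (n i)) :=
  {z | ∀ i ∈ A, z i = x i}

/-- A set `A` is closed under activation: every vertex with at least `θ v`
neighbors in `A` already belongs to `A`. -/
def activationClosed {V : Type*} [Fintype V] (G : SimpleGraph V) (θ : V → ℤ)
    (A : Set V) : Prop :=
  ∀ v : V, θ v ≤ ((A ∩ G.neighborSet v).ncard : ℤ) → v ∈ A

/-- The activation closure `[S]_θ`: the smallest activation-closed superset of `S`. -/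
def activationClosure {V : Type*} [Fintype V] (G : SimpleGraph V) (θ : V → ℤ)
    (S : Set V) : Set V :=
  ⋂₀ {A : Set V | S ⊆ A ∧ activationClosed G θ A}

lemma mySubset_closure {V : Type*} [Fintype V] (G : SimpleGraph V) (θ : V → ℤ) (S : Set V) :
    S ⊆ activationClosure G θ S := fun v hv A hA => hA.1 hv

lemma closure_subset {V : Type*} [Fintype V] (G : SimpleGraph V) (θ : V → ℤ) {S A : Set V}
    (hS : S ⊆ A) (hA : activationClosed G θ A) : activationClosure G θ S ⊆ A :=
  fun v hv => hv A ⟨hS, hA⟩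

lemma closure_closed {V : Type*} [Fintype V] (G : SimpleGraph V) (θ : V → ℤ) (S : Set V) :
    activationClosed G θ (activationClosure G θ S) := by
  intro v hv A hA
  refine hA.2 v (le_trans hv ?_)
  have : (activationClosure G θ S ∩ G.neighborSet v).ncard ≤ (A ∩ G.neighborSet v).ncard :=
    Set.ncard_le_ncard (Set.inter_subset_inter_left _ (fun w hw => hw A hA)) (Set.toFinite _)
  exact_mod_cast this

lemma adj_iff {t : ℕ} {n : Fin t → ℕ} {z v : Π i, Fin (n i)} :
    (hammingGraph n).Adj z v ↔ ∃ i, z i ≠ v i ∧ ∀ j, j ≠ i → z j = v j := by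
  constructor
  · intro h
    have h1 : (Finset.univ.filter fun i => z i ≠ v i).card = 1 := h
    obtain ⟨i, hi⟩ := Finset.card_eq_one.mp h1
    refine ⟨i, ?_, ?_⟩
    · have : i ∈ Finset.univ.filter fun i => z i ≠ v i := hi ▸ Finset.mem_singleton_self i
      exact (Finset.mem_filter.mp this).2
    · intro j hj
      by_contra hzj
      have : j ∈ Finset.univ.filter fun i => z i ≠ v i := Finset.mem_filter.mpr ⟨Finset.mem_univ _, hzj⟩
      rw [hi, Finset.mem_singleton] at this
      exact hj this
  · rintro ⟨i, hi, hj⟩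
    show (Finset.univ.filter fun k => z k ≠ v k).card = 1
    have : (Finset.univ.filter fun k => z k ≠ v k) = {i} := by
      ext k
      simp only [Finset.mem_filter, Finset.mem_univ, true_and, Finset.mem_singleton]
      constructor
      · intro hk; by_contra hki; exact hk (hj k hki)
      · rintro rfl; exact hi
    rw [this, Finset.card_singleton]

lemma adj_update {t : ℕ} {n : Fin t → ℕ} (z : Π i, Fin (n i)) (i : Fin t)
    (a : Fin (n i)) (ha : a ≠ z i) : (hammingGraph n).Adj (Function.update z i a) z := by
  rw [adj_iff]
  exact ⟨i, by simp [ha], fun j hj => Function.update_of_ne hj _ _⟩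

lemma subcube_closed {t : ℕ} {n : Fin t → ℕ} (x : Π i, Fin (n i)) (C : Set (Fin t)) :
    activationClosed (hammingGraph n) (fun _ => (2 : ℤ)) (subcube x C) := by
  intro v hv
  by_contra hvC
  simp only [subcube, Set.mem_setOf_eq, not_forall] at hvC
  obtain ⟨i, hiC, hvi⟩ := hvC
  have hv' : (2:ℤ) ≤ ((subcube x C ∩ (hammingGraph n).neighborSet v).ncard : ℤ) := hv
  have h2 : 1 < (subcube x C ∩ (hammingGraph n).neighborSet v).ncard := by exact_mod_cast hv'
  obtain ⟨z1, z2, hz1, hz2, hne⟩ := (Set.one_lt_ncard_iff (Set.toFinite _)).mp h2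
  -- both z1 and z2 are forced to equal update v i (x i)
  have key : ∀ z, z ∈ subcube x C ∩ (hammingGraph n).neighborSet v → z = Function.update v i (x i) := by
    rintro z ⟨hzC, hzv⟩
    obtain ⟨j, hj, hall⟩ := adj_iff.mp hzv
    have hij : i = j := by
      by_contra hij
      exact hvi ((hall i hij).trans (hzC i hiC))
    subst hij
    funext k
    by_cases hk : k = i
    · subst hk; rw [Function.update_self]; exact hzC _ hiC
    · rw [Function.update_of_ne hk]; exact (hall k hk).symm
  exact hne ((key z1 hz1).trans (key z2 hz2).symm)

theorem closure_subcube_union_subcube {t : ℕ} (n : Fin t → ℕ) (hn : ∀ i, 2 ≤ n i)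
    (x : Π i, Fin (n i)) (A B : Set (Fin t)) :
    activationClosure (hammingGraph n) (fun _ => (2 : ℤ))
      (subcube x A ∪ subcube x B) = subcube x (A ∩ B) := by
  classical
  apply Set.Subset.antisymm
  · refine closure_subset _ _ ?_ (subcube_closed x (A ∩ B))
    rintro z (hz | hz) i ⟨hiA, hiB⟩
    · exact hz i hiA
    · exact hz i hiB
  · set cl := activationClosure (hammingGraph n) (fun _ => (2 : ℤ))
      (subcube x A ∪ subcube x B) with hcl
    intro z hz
    -- strong induction on number of disagreements
    have main : ∀ k : ℕ, ∀ z : Π i, Fin (n i), z ∈ subcube x (A ∩ B) →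
        ({i | i ∈ A ∪ B ∧ z i ≠ x i}).ncard = k → z ∈ cl := by
      intro k
      induction k using Nat.strong_induction_on with
      | _ k ih =>
        intro z hz hk
        by_cases hA : ∀ i ∈ A, z i = x i
        · exact mySubset_closure _ _ _ (Or.inl hA)
        by_cases hB : ∀ i ∈ B, z i = x i
        · exact mySubset_closure _ _ _ (Or.inr hB)
        push_neg at hA hB
        obtain ⟨i, hiA, hzi⟩ := hA
        obtain ⟨j, hjB, hzj⟩ := hB
        have hiB : i ∉ B := fun h => hzi (hz i ⟨hiA, h⟩)
        have hjA : j ∉ A := fun h => hzj (hz j ⟨h, hjB⟩)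
        have hij : i ≠ j := fun h => hiB (h ▸ hjB)
        set z1 := Function.update z i (x i) with hz1def
        set z2 := Function.update z j (x j) with hz2def
        have hz1m : z1 ∈ subcube x (A ∩ B) := by
          intro k ⟨hkA, hkB⟩
          by_cases hki : k = i
          · subst hki; simp [hz1def]
          · rw [hz1def, Function.update_of_ne hki]; exact hz k ⟨hkA, hkB⟩
        have hz2m : z2 ∈ subcube x (A ∩ B) := by
          intro k ⟨hkA, hkB⟩
          by_cases hkj : k = j
          · subst hkj; simp [hz2def]
          · rw [hz2def, Function.update_of_ne hkj]; exact hz k ⟨hkA, hkB⟩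
        have hset1 : {l | l ∈ A ∪ B ∧ z1 l ≠ x l} = {l | l ∈ A ∪ B ∧ z l ≠ x l} \ {i} := by
          ext l
          simp only [Set.mem_setOf_eq, Set.mem_diff, Set.mem_singleton_iff]
          constructor
          · rintro ⟨hl, hne⟩
            have hli : l ≠ i := by rintro rfl; exact hne (by simp [hz1def])
            rw [hz1def, Function.update_of_ne hli] at hne
            exact ⟨⟨hl, hne⟩, hli⟩
          · rintro ⟨⟨hl, hne⟩, hli⟩
            rw [hz1def]
            exact ⟨hl, by rwa [Function.update_of_ne hli]⟩
        have hset2 : {l | l ∈ A ∪ B ∧ z2 l ≠ x l} = {l | l ∈ A ∪ B ∧ z l ≠ x l} \ {j} := by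
          ext l
          simp only [Set.mem_setOf_eq, Set.mem_diff, Set.mem_singleton_iff]
          constructor
          · rintro ⟨hl, hne⟩
            have hlj : l ≠ j := by rintro rfl; exact hne (by simp [hz2def])
            rw [hz2def, Function.update_of_ne hlj] at hne
            exact ⟨⟨hl, hne⟩, hlj⟩
          · rintro ⟨⟨hl, hne⟩, hlj⟩
            rw [hz2def]
            exact ⟨hl, by rwa [Function.update_of_ne hlj]⟩
        have hifin : ({l | l ∈ A ∪ B ∧ z l ≠ x l}).Finite := Set.toFinite _
        have himem : i ∈ {l | l ∈ A ∪ B ∧ z l ≠ x l} := ⟨Or.inl hiA, hzi⟩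
        have hjmem : j ∈ {l | l ∈ A ∪ B ∧ z l ≠ x l} := ⟨Or.inr hjB, hzj⟩
        have hcard1 : ({l | l ∈ A ∪ B ∧ z1 l ≠ x l}).ncard < k := by
          rw [hset1, ← hk]
          exact Set.ncard_diff_singleton_lt_of_mem himem hifin
        have hcard2 : ({l | l ∈ A ∪ B ∧ z2 l ≠ x l}).ncard < k := by
          rw [hset2, ← hk]
          exact Set.ncard_diff_singleton_lt_of_mem hjmem hifin
        have hz1cl : z1 ∈ cl := ih _ hcard1 z1 hz1m rfl
        have hz2cl : z2 ∈ cl := ih _ hcard2 z2 hz2m rfl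
        have hne12 : z1 ≠ z2 := by
          intro h
          have : z1 j = z2 j := by rw [h]
          rw [hz1def, hz2def, Function.update_of_ne (Ne.symm hij), Function.update_self] at this
          exact hzj this
        have hadj1 : (hammingGraph n).Adj z1 z := adj_update z i (x i) (Ne.symm hzi)
        have hadj2 : (hammingGraph n).Adj z2 z := adj_update z j (x j) (Ne.symm hzj)
        refine closure_closed _ _ _ z ?_
        have hsub : {z1, z2} ⊆ cl ∩ (hammingGraph n).neighborSet z := by
          rintro w (rfl | rfl)
          · exact ⟨hz1cl, hadj1.symm⟩
          · exact ⟨hz2cl, hadj2.symm⟩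
        have h2 : 2 ≤ (cl ∩ (hammingGraph n).neighborSet z).ncard := by
          calc 2 = ({z1, z2} : Set _).ncard := (Set.ncard_pair hne12).symm
          _ ≤ _ := Set.ncard_le_ncard hsub (Set.toFinite _)
        exact_mod_cast h2
    exact main _ z hz rfl
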